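/- Let Λ = (L, 𝔐, ⊨) be a satisfaction system with the reverse monotonic bijection property (RMBP): for all B₁, B₂ ⊆ L and every model m, m ∈ Mod(B₁) and m ∈ Mod(B₂) iff m ∈ Mod(B₁ ∪ B₂). Then for every set of models M ⊆ 𝔐, the set FRsups(M, Λ) of ⊆-minimal finitely representable supersets of M has at most one element. -/
import Mathlib


variable {α β : Type*}

def ModelsOf (sat : β → Set α → Prop) (B : Set α) : Set β := {m | sat m B}

def FRsets (sat : β → Set α → Prop) : Set (Set β) :=
  {X | ∃ B : Set α, B.Finite ∧ ModelsOf sat B = X}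

def FRsubs (sat : β → Set α → Prop) (M : Set β) : Set (Set β) :=
  {X | X ∈ FRsets sat ∧ X ⊆ M ∧ ¬ ∃ Y ∈ FRsets sat, X ⊂ Y ∧ Y ⊆ M}

def FRsups (sat : β → Set α → Prop) (M : Set β) : Set (Set β) :=
  {X | X ∈ FRsets sat ∧ M ⊆ X ∧ ¬ ∃ Y ∈ FRsets sat, M ⊆ Y ∧ Y ⊂ X}

theorem stmt2 (sat : β → Set α → Prop)
    (hRMBP : ∀ (B₁ B₂ : Set α) (m : β),
      (m ∈ ModelsOf sat B₁ ∧ m ∈ ModelsOf sat B₂) ↔ m ∈ ModelsOf sat (B₁ ∪ B₂)) :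
    ∀ M : Set β, (FRsups sat M).Subsingleton := by
  intro M X hX Y hY
  obtain ⟨⟨B₁, hB₁f, hB₁⟩, hMX, hXmin⟩ := hX
  obtain ⟨⟨B₂, hB₂f, hB₂⟩, hMY, hYmin⟩ := hY
  have hInter : ModelsOf sat (B₁ ∪ B₂) = X ∩ Y := by
    ext m
    rw [← hRMBP, hB₁, hB₂]; rfl
  have hFR : X ∩ Y ∈ FRsets sat := ⟨B₁ ∪ B₂, hB₁f.union hB₂f, hInter⟩
  have hMXY : M ⊆ X ∩ Y := Set.subset_inter hMX hMY
  have hXeq : X ∩ Y = X := by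
    by_contra h
    exact hXmin ⟨X ∩ Y, hFR, hMXY, lt_of_le_of_ne Set.inter_subset_left h⟩
  have hYeq : X ∩ Y = Y := by
    by_contra h
    exact hYmin ⟨X ∩ Y, hFR, hMXY, lt_of_le_of_ne Set.inter_subset_right h⟩
  rw [← hXeq, hYeq]
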